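/- If S is an ε-approximation of the range space (P, B) of balls (i.e., for every ball B, | |P∩B|/|P| − |S∩B|/|S| | ≤ ε), and K is a non-increasing radial kernel bounded by 1 whose super-level sets are balls, then for every q ∈ ℝ^d, |kde_P(q) − kde_S(q)| ≤ ε. -/

import Mathlib

open MeasureTheory intervalIntegral Set

set_option maxHeartbeats 1000000 in
open scoped Classical in
lemma aux_ind_intble (a : ℝ) :
    IntervalIntegrable (fun τ => if τ ≤ a then (1:ℝ) else 0) volume 0 1 := by
  have : (fun τ => if τ ≤ a then (1:ℝ) else 0)
      = Set.indicator {x | x ≤ a} (fun _ => (1:ℝ)) := by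
    ext τ; simp [Set.indicator_apply, Set.mem_setOf_eq]
  rw [this, intervalIntegrable_iff_integrableOn_Ioc_of_le (by norm_num)]
  exact (integrableOn_const (C := (1:ℝ)) measure_Ioc_lt_top.ne).indicator measurableSet_Iic

set_option maxHeartbeats 1000000 in
open scoped Classical in
lemma aux_ind_integral (a : ℝ) (h0 : 0 ≤ a) (h1 : a ≤ 1) :
    ∫ τ in (0:ℝ)..1, (if τ ≤ a then (1:ℝ) else 0) = a := by
  have : (fun τ => if τ ≤ a then (1:ℝ) else 0)
      = Set.indicator {x | x ≤ a} (fun _ => (1:ℝ)) := by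
    ext τ; simp [Set.indicator_apply, Set.mem_setOf_eq]
  rw [this, intervalIntegral.integral_indicator (Set.mem_Icc.mpr ⟨h0, h1⟩)]
  simp

set_option maxHeartbeats 1000000 in
open scoped Classical in
theorem eps_approx_kde (d : ℕ) (ε : ℝ) (hε : 0 ≤ ε)
    (P S : Finset (EuclideanSpace ℝ (Fin d))) (hP : P.Nonempty) (hS : S.Nonempty)
    (k : ℝ → ℝ)
    (hk_anti : ∀ s t : ℝ, 0 ≤ s → s ≤ t → k t ≤ k s)
    (hk01 : ∀ t : ℝ, 0 ≤ t → 0 ≤ k t ∧ k t ≤ 1)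
    (hlink : ∀ (q : EuclideanSpace ℝ (Fin d)) (τ : ℝ), 0 < τ →
      ∃ (c : EuclideanSpace ℝ (Fin d)) (r : ℝ),
        ∀ x : EuclideanSpace ℝ (Fin d), (τ ≤ k ‖x - q‖ ↔ x ∈ Metric.closedBall c r))
    (happrox : ∀ (c : EuclideanSpace ℝ (Fin d)) (r : ℝ),
      |((P.filter fun p => p ∈ Metric.closedBall c r).card : ℝ) / P.card -
        ((S.filter fun p => p ∈ Metric.closedBall c r).card : ℝ) / S.card| ≤ ε) :
    ∀ q : EuclideanSpace ℝ (Fin d),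
      |(∑ p ∈ P, k ‖p - q‖) / P.card - (∑ p ∈ S, k ‖p - q‖) / S.card| ≤ ε := by
  intro q
  -- integrability of the indicator sums
  have hint : ∀ X : Finset (EuclideanSpace ℝ (Fin d)),
      IntervalIntegrable (fun τ => ∑ p ∈ X, if τ ≤ k ‖p - q‖ then (1:ℝ) else 0)
        volume 0 1 := by
    intro X
    have eq : (fun τ => ∑ p ∈ X, if τ ≤ k ‖p - q‖ then (1:ℝ) else 0)
        = ∑ p ∈ X, fun τ => if τ ≤ k ‖p - q‖ then (1:ℝ) else 0 := by
      ext τ; simp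
    rw [eq]
    exact IntervalIntegrable.sum X fun p _ => aux_ind_intble _
  -- layer cake for a finite set
  have hsum : ∀ X : Finset (EuclideanSpace ℝ (Fin d)),
      (∑ p ∈ X, k ‖p - q‖)
        = ∫ τ in (0:ℝ)..1, ∑ p ∈ X, if τ ≤ k ‖p - q‖ then (1:ℝ) else 0 := by
    intro X
    rw [intervalIntegral.integral_finset_sum (fun p _ => aux_ind_intble _)]
    refine Finset.sum_congr rfl fun p _ => ?_
    exact (aux_ind_integral _ (hk01 _ (norm_nonneg _)).1 (hk01 _ (norm_nonneg _)).2).symm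
  have key : (∑ p ∈ P, k ‖p - q‖) / P.card - (∑ p ∈ S, k ‖p - q‖) / S.card
      = ∫ τ in (0:ℝ)..1,
          ((∑ p ∈ P, if τ ≤ k ‖p - q‖ then (1:ℝ) else 0) / P.card
            - (∑ p ∈ S, if τ ≤ k ‖p - q‖ then (1:ℝ) else 0) / S.card) := by
    rw [intervalIntegral.integral_sub ((hint P).div_const _) ((hint S).div_const _),
      intervalIntegral.integral_div, intervalIntegral.integral_div, hsum P, hsum S]
  rw [key]
  have := intervalIntegral.norm_integral_le_of_norm_le_const (a := (0:ℝ)) (b := 1)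
    (C := ε)
    (f := fun τ => (∑ p ∈ P, if τ ≤ k ‖p - q‖ then (1:ℝ) else 0) / P.card
      - (∑ p ∈ S, if τ ≤ k ‖p - q‖ then (1:ℝ) else 0) / S.card) ?_
  · simpa using this
  · intro τ hτ
    rw [Set.uIoc_of_le (by norm_num)] at hτ
    obtain ⟨c, r, hcr⟩ := hlink q τ hτ.1
    have hP' : (∑ p ∈ P, if τ ≤ k ‖p - q‖ then (1:ℝ) else 0)
        = ((P.filter fun p => p ∈ Metric.closedBall c r).card : ℝ) := by
      rw [Finset.sum_boole]
      exact congrArg _ (congrArg Finset.card (Finset.filter_congr fun p _ => hcr p))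
    have hS' : (∑ p ∈ S, if τ ≤ k ‖p - q‖ then (1:ℝ) else 0)
        = ((S.filter fun p => p ∈ Metric.closedBall c r).card : ℝ) := by
      rw [Finset.sum_boole]
      exact congrArg _ (congrArg Finset.card (Finset.filter_congr fun p _ => hcr p))
    rw [Real.norm_eq_abs, hP', hS']
    exact happrox c r
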